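/- Let (𝔫, ⟨·,·⟩) be the metric Lie algebra of the double extension construction (for any admissible d and S), and let 𝔥 be the Lie algebra (under commutator) of all skew-symmetric derivations of (𝔫, ⟨·,·⟩), acting on 𝔫 in the natural way. Then 𝔫 is not a semisimple 𝔥-module: 𝔫 cannot be written as a direct sum of simple (irreducible) 𝔥-submodules; equivalently, some 𝔥-invariant subspace of 𝔫 admits no 𝔥-invariant complement. -/

import Mathlib

open Matrix

/-- The block matrix `P = [[0, -Sᵀ],[S, Sᵀ - S]]`. -/
def Pmat {s : ℕ} (S : Matrix (Fin s) (Fin s) ℝ) :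
    Matrix (Fin s ⊕ Fin s) (Fin s ⊕ Fin s) ℝ :=
  Matrix.fromBlocks 0 (-Sᵀ) S (Sᵀ - S)

/-- The block matrix `Q = [[0, Sᵀ],[S, Sᵀ - S]]`. -/
def Qmat {s : ℕ} (S : Matrix (Fin s) (Fin s) ℝ) :
    Matrix (Fin s ⊕ Fin s) (Fin s ⊕ Fin s) ℝ :=
  Matrix.fromBlocks 0 Sᵀ S (Sᵀ - S)

/-- The underlying vector space `𝔫 = ℝf ⊕ ℝ^{2s} ⊕ ℝe`; the element `(α, X, η)` represents
`αf + X + ηe`. -/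
abbrev DE (s : ℕ) : Type := ℝ × ((Fin s ⊕ Fin s) → ℝ) × ℝ

/-- The Lie bracket `[αf + X + ηe, βf + Y + ρe] = αQY − βQX + ⟨PX, Y⟩₀ e` of the double
extension construction. -/
def bkDE {s : ℕ} (S : Matrix (Fin s) (Fin s) ℝ) (a b : DE s) : DE s :=
  (0, a.1 • (Qmat S).mulVec b.2.1 - b.1 • (Qmat S).mulVec a.2.1,
    (Pmat S).mulVec a.2.1 ⬝ᵥ b.2.1)

/-- The inner product `⟨αf + X + ηe, βf + Y + ρe⟩ = ⟨X,Y⟩₀ + αρ + βη` of the double extension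
construction. -/
def formDE {s : ℕ} (a b : DE s) : ℝ :=
  a.2.1 ⬝ᵥ b.2.1 + a.1 * b.2.2 + b.1 * a.2.2

/-- `D` is a skew-symmetric derivation of the double extension `(𝔫, ⟨·,·⟩)`: a linear map that
is a derivation of the bracket and skew-symmetric with respect to the form. -/
def IsSkewDerivDE {s : ℕ} (S : Matrix (Fin s) (Fin s) ℝ) (D : DE s → DE s) : Prop :=
  IsLinearMap ℝ D ∧
  (∀ a b : DE s, D (bkDE S a b) = bkDE S (D a) b + bkDE S a (D b)) ∧
  (∀ a b : DE s, formDE (D a) b + formDE a (D b) = 0)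

/-- the double extension `𝔫` is not a semisimple module over the Lie algebra `𝔥`
of all its skew-symmetric derivations: some `𝔥`-invariant subspace admits no `𝔥`-invariant
complement. -/
def u1 (s : ℕ) : Fin s ⊕ Fin s → ℝ := Sum.elim 0 1

lemma vkeyA {s : ℕ} (S : Matrix (Fin s) (Fin s) ℝ) :
    Pmat S *ᵥ u1 s = -((Qmat S)ᵀ *ᵥ u1 s) := by
  have h : (Qmat S)ᵀ = Matrix.fromBlocks 0 Sᵀ S (S - Sᵀ) := by
    simp [Qmat, Matrix.fromBlocks_transpose, Matrix.transpose_sub]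
  rw [h]
  show Pmat S *ᵥ Sum.elim 0 1 = -(_ *ᵥ Sum.elim 0 1)
  rw [Pmat, Matrix.fromBlocks_mulVec, Matrix.fromBlocks_mulVec]
  funext k
  cases k <;>
    simp [Matrix.sub_mulVec, Matrix.neg_mulVec]

lemma keyA {s : ℕ} (S : Matrix (Fin s) (Fin s) ℝ) (Y : Fin s ⊕ Fin s → ℝ) :
    Pmat S *ᵥ u1 s ⬝ᵥ Y = -(u1 s ⬝ᵥ (Qmat S *ᵥ Y)) := by
  rw [vkeyA, dotProduct_mulVec, ← mulVec_transpose, neg_dotProduct]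

lemma rows_eq {s : ℕ} (S : Matrix (Fin s) (Fin s) ℝ) (i : Fin s) (k : Fin s ⊕ Fin s) :
    Qmat S (Sum.inr i) k = Pmat S (Sum.inr i) k := by
  cases k <;> simp [Qmat, Pmat]

lemma u1_dot {s : ℕ} (W : Fin s ⊕ Fin s → ℝ) : u1 s ⬝ᵥ W = ∑ i, W (Sum.inr i) := by
  simp [u1, dotProduct, Fintype.sum_sum_type]

lemma keyB {s : ℕ} (S : Matrix (Fin s) (Fin s) ℝ) (X : Fin s ⊕ Fin s → ℝ) :
    Pmat S *ᵥ X ⬝ᵥ u1 s = u1 s ⬝ᵥ (Qmat S *ᵥ X) := by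
  rw [dotProduct_comm, u1_dot, u1_dot]
  refine Finset.sum_congr rfl fun i _ => ?_
  simp only [Matrix.mulVec, dotProduct]
  exact Finset.sum_congr rfl fun k _ => by rw [rows_eq]

def D0 {s : ℕ} : DE s → DE s := fun a => (0, a.1 • u1 s, -(u1 s ⬝ᵥ a.2.1))

lemma hD0 {s : ℕ} (S : Matrix (Fin s) (Fin s) ℝ) : IsSkewDerivDE S (D0 (s := s)) := by
  refine ⟨⟨fun a b => ?_, fun c a => ?_⟩, fun a b => ?_, fun a b => ?_⟩
  · simp [D0, Prod.ext_iff, add_smul, dotProduct_add]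
    ring
  · simp [D0, Prod.ext_iff, smul_smul, dotProduct_smul, Prod.smul_def, smul_eq_mul]
  · refine Prod.ext (by simp [bkDE, D0]) (Prod.ext ?_ ?_)
    · show (bkDE S a b).1 • u1 s = _
      simp [bkDE, D0, Matrix.mulVec_smul, smul_smul]
      module
    · show -(u1 s ⬝ᵥ (a.1 • (Qmat S).mulVec b.2.1 - b.1 • (Qmat S).mulVec a.2.1)) = _
      show _ = Pmat S *ᵥ (a.1 • u1 s) ⬝ᵥ b.2.1 + Pmat S *ᵥ a.2.1 ⬝ᵥ (b.1 • u1 s)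
      rw [Matrix.mulVec_smul, smul_dotProduct, dotProduct_smul, keyB, dotProduct_sub,
        dotProduct_smul, dotProduct_smul, keyA]
      simp [smul_eq_mul]; ring
  · simp [formDE, D0, dotProduct_smul, smul_dotProduct, dotProduct_comm (u1 s)]

lemma Pmat_transpose {s : ℕ} (S : Matrix (Fin s) (Fin s) ℝ) : (Pmat S)ᵀ = -Pmat S := by
  ext k l
  cases k <;> cases l <;> simp [Pmat] <;> ring

theorem stmt6 (d s : ℕ) (hd : 1 < d) (hs : 1 ≤ s)
    (S : Matrix (Fin s) (Fin s) ℝ) (hSd : S ^ d = 0) (hSd1 : S ^ (d - 1) ≠ 0) :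
    ∃ W : Submodule ℝ (DE s),
      (∀ D : DE s → DE s, IsSkewDerivDE S D → ∀ x ∈ W, D x ∈ W) ∧
      ¬ ∃ W' : Submodule ℝ (DE s),
          (∀ D : DE s → DE s, IsSkewDerivDE S D → ∀ x ∈ W', D x ∈ W') ∧
          W ⊓ W' = ⊥ ∧ W ⊔ W' = ⊤ := by
  -- S ≠ 0
  have hS0 : S ≠ 0 := by
    intro h
    apply hSd1
    rw [h, zero_pow]
    omega
  obtain ⟨i, j, hij⟩ : ∃ i j, S i j ≠ 0 := by
    by_contra h
    push_neg at h
    exact hS0 (by ext i j; simpa using h i j)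
  set eV : DE s := (0, 0, 1) with heV
  refine ⟨Submodule.span ℝ {eV}, ?_, ?_⟩
  · -- invariance
    intro D hD x hx
    obtain ⟨hlin, hder, hskew⟩ := hD
    have h0 : D 0 = 0 := by
      have := hlin.map_smul (0 : ℝ) 0
      simpa using this
    set n : DE s := D eV with hn
    -- n.1 = 0
    have hn1 : n.1 = 0 := by
      have h := hskew eV eV
      rw [← hn] at h
      simp [formDE, heV] at h
      linarith
    -- Q *ᵥ n.2.1 = 0
    have hQV : Qmat S *ᵥ n.2.1 = 0 := by
      have hb : bkDE S ((1 : ℝ), 0, 0) eV = 0 := by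
        simp [bkDE, heV, Prod.ext_iff]
      have h := hder ((1 : ℝ), 0, 0) eV
      rw [hb, h0, ← hn] at h
      have h2 := congrArg (fun z : DE s => z.2.1) h.symm
      simpa [bkDE, heV] using h2
    -- P *ᵥ n.2.1 = 0
    have hPV : Pmat S *ᵥ n.2.1 = 0 := by
      funext k
      have hQk := congrFun hQV k
      cases k with
      | inl a =>
        simp only [Matrix.mulVec, dotProduct, Pi.zero_apply] at hQk ⊢
        rw [← neg_eq_zero, ← Finset.sum_neg_distrib] at hQk
        · rw [← hQk]
          refine Finset.sum_congr rfl fun l _ => ?_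
          cases l <;> simp only [Pmat, Qmat, Matrix.fromBlocks_apply₁₁, Matrix.fromBlocks_apply₁₂,
            Matrix.neg_apply, Matrix.transpose_apply, Pi.zero_apply, Matrix.zero_apply] <;> ring
      | inr a =>
        simp only [Matrix.mulVec, dotProduct, Pi.zero_apply] at hQk ⊢
        rw [← hQk]
        exact Finset.sum_congr rfl fun l _ => by rw [rows_eq]
    -- key: n.2.1 = 0
    have hV : n.2.1 = 0 := by
      set X : Fin s ⊕ Fin s → ℝ := Sum.elim (Pi.single j 1) 0 with hX
      have hPXV : Pmat S *ᵥ X ⬝ᵥ n.2.1 = 0 := by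
        rw [dotProduct_comm, dotProduct_mulVec, ← mulVec_transpose, Pmat_transpose,
          Matrix.neg_mulVec, hPV]
        simp
      have hb : bkDE S ((0 : ℝ), X, 0) ((0 : ℝ), n.2.1, 0) = 0 := by
        simp [bkDE, hPXV, Prod.ext_iff]
      have h := hder ((0 : ℝ), X, 0) ((0 : ℝ), n.2.1, 0)
      rw [hb, h0] at h
      have hD1 : (D ((0 : ℝ), n.2.1, 0)).1 = -(n.2.1 ⬝ᵥ n.2.1) := by
        have h3 := hskew ((0 : ℝ), n.2.1, 0) eV
        simp [formDE, heV, ← hn] at h3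
        linarith
      have h2 : (0 : (Fin s ⊕ Fin s) → ℝ) = (n.2.1 ⬝ᵥ n.2.1) • (Qmat S *ᵥ X) := by
        have h2 := congrArg (fun z : DE s => z.2.1) h
        simpa [bkDE, hQV, hD1] using h2
      have h3 := congrFun h2 (Sum.inr i)
      have hQX : (Qmat S *ᵥ X) (Sum.inr i) = S i j := by
        rw [hX, Qmat, Matrix.fromBlocks_mulVec]
        simp [Matrix.mulVec, dotProduct, Pi.single_apply]
      simp only [Pi.zero_apply, Pi.smul_apply, smul_eq_mul] at h3
      rw [hQX] at h3
      have h4 : n.2.1 ⬝ᵥ n.2.1 = 0 := by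
        rcases mul_eq_zero.mp h3.symm with h | h
        · exact h
        · exact absurd h hij
      exact dotProduct_self_eq_zero.mp h4
    obtain ⟨c, hc⟩ := Submodule.mem_span_singleton.mp hx
    rw [← hc, hlin.map_smul]
    refine Submodule.smul_mem _ _ ?_
    rw [Submodule.mem_span_singleton]
    refine ⟨n.2.2, ?_⟩
    rw [← hn, heV]
    have hn' : n = (n.1, n.2.1, n.2.2) := rfl
    rw [hn', hn1, hV]
    simp [Prod.ext_iff]
  · rintro ⟨W', hinv, hbot, htop⟩
    have hf : ((1 : ℝ), 0, 0) ∈ (⊤ : Submodule ℝ (DE s)) := trivial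
    rw [← htop, Submodule.mem_sup] at hf
    obtain ⟨y, hy, z, hz, hyz⟩ := hf
    obtain ⟨c, hc⟩ := Submodule.mem_span_singleton.mp hy
    have hz1 : z.1 = 1 := by
      have h1 := congrArg Prod.fst hyz
      have h2 : y.1 = 0 := by rw [← hc, heV]; simp
      simp only [Prod.fst_add, h2, zero_add] at h1
      exact h1
    have k1 : D0 z ∈ W' := hinv D0 (hD0 S) z hz
    have k2 : D0 (D0 z) ∈ W' := hinv D0 (hD0 S) _ k1
    have huu : u1 s ⬝ᵥ u1 s = (s : ℝ) := by rw [u1_dot]; simp [u1]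
    have hval : D0 (D0 z) = (0, 0, -(z.1 * (s : ℝ))) := by
      show ((0 : ℝ), (0:ℝ) • u1 s, -(u1 s ⬝ᵥ (z.1 • u1 s))) = _
      rw [zero_smul, dotProduct_smul, smul_eq_mul, huu]
    have hmem : D0 (D0 z) ∈ Submodule.span ℝ {eV} ⊓ W' := by
      refine Submodule.mem_inf.mpr ⟨?_, k2⟩
      rw [Submodule.mem_span_singleton]
      refine ⟨-(z.1 * (s : ℝ)), ?_⟩
      rw [hval, heV]
      simp [Prod.ext_iff]
    rw [hbot, Submodule.mem_bot] at hmem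
    rw [hval] at hmem
    have h5 : -(z.1 * (s : ℝ)) = 0 := congrArg (fun w : DE s => w.2.2) hmem
    rw [hz1, one_mul, neg_eq_zero] at h5
    have : s = 0 := by exact_mod_cast h5
    omega
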